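/- Let r ≥ 0 and let Q : ℂ^{r+1} → Matrix (Fin (N+1)) (Fin (N+1)) ℂ be a linear map such that Q x is a symmetric matrix for every x. Assume the spectral hypersurface is nonsingular: for every nonzero x ∈ ℂ^{r+1} with det(Q x) = 0, the Fréchet derivative at x of the map y ↦ det(Q y) is nonzero. Then the common zero set of the quadrics is a regular complete intersection: for every nonzero u ∈ ℂ^{N+1} with uᵀ (Q x) u = 0 for all x ∈ ℂ^{r+1}, the only x ∈ ℂ^{r+1} with (Q x)·u = 0 is x = 0. -/

import Mathlib

open Matrix

/-- The determinant as a continuous multilinear map in the rows. -/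
noncomputable def detCM (n : ℕ) :
    ContinuousMultilinearMap ℂ (fun _ : Fin n => Fin n → ℂ) ℂ :=
  (Matrix.detRowAlternating :
      (Fin n → ℂ) [⋀^Fin n]→ₗ[ℂ] ℂ).toMultilinearMap.mkContinuous
    (Nat.factorial n) (by
      intro m
      have hm : (Matrix.detRowAlternating :
          (Fin n → ℂ) [⋀^Fin n]→ₗ[ℂ] ℂ).toMultilinearMap m = (Matrix.of m).det := rfl
      rw [hm, Matrix.det_apply]
      refine (norm_sum_le _ _).trans ?_
      have hterm : ∀ σ : Equiv.Perm (Fin n),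
          ‖Equiv.Perm.sign σ • ∏ i, Matrix.of m (σ i) i‖ ≤ ∏ i, ‖m i‖ := by
        intro σ
        have h1 : ‖Equiv.Perm.sign σ • ∏ i, Matrix.of m (σ i) i‖
            = ‖∏ i, m (σ i) i‖ := by
          rcases Int.units_eq_one_or (Equiv.Perm.sign σ) with h | h <;>
            simp [h, Matrix.of_apply]
        rw [h1, norm_prod]
        calc ∏ i, ‖m (σ i) i‖ ≤ ∏ i, ‖m (σ i)‖ := by
              exact Finset.prod_le_prod (fun i _ => norm_nonneg _)
                (fun i _ => norm_le_pi_norm (m (σ i)) i)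
          _ = ∏ i, ‖m i‖ := Equiv.prod_comp σ (fun i => ‖m i‖)
      calc ∑ σ : Equiv.Perm (Fin n), ‖Equiv.Perm.sign σ • ∏ i, Matrix.of m (σ i) i‖
          ≤ ∑ _σ : Equiv.Perm (Fin n), ∏ i, ‖m i‖ :=
            Finset.sum_le_sum fun σ _ => hterm σ
        _ = (Nat.factorial n : ℝ) * ∏ i, ‖m i‖ := by
            simp [Finset.sum_const, Fintype.card_perm, mul_comm]
        )

lemma ker_pivot {N : ℕ} (A : Matrix (Fin (N + 1)) (Fin (N + 1)) ℂ) (a b : Fin (N + 1))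
    (h : A.adjugate a b ≠ 0) :
    ∀ w : Fin (N + 1) → ℂ, A.mulVec w = 0 → w a = 0 → w = 0 := by
  have hS : (A.submatrix b.succAbove a.succAbove).det ≠ 0 := by
    intro h0
    apply h
    rw [Matrix.adjugate_fin_succ_eq_det_submatrix, h0, mul_zero]
  intro w hw hwa
  have hS0 : (A.submatrix b.succAbove a.succAbove).mulVec (w ∘ a.succAbove) = 0 := by
    funext p
    have hsum := Fin.sum_univ_succAbove (fun k => A (b.succAbove p) k * w k) a
    have hrow : ∑ k, A (b.succAbove p) k * w k = 0 := congrFun hw (b.succAbove p)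
    have : ∑ q, A (b.succAbove p) (a.succAbove q) * w (a.succAbove q) = 0 := by
      rw [hsum, hwa, mul_zero, zero_add] at hrow
      exact hrow
    simpa [Matrix.mulVec, dotProduct, Matrix.submatrix_apply, Function.comp] using this
  have hw0 : w ∘ a.succAbove = 0 := Matrix.eq_zero_of_mulVec_eq_zero hS hS0
  funext k
  rcases eq_or_ne k a with rfl | hk
  · exact hwa
  · obtain ⟨q, rfl⟩ := Fin.exists_succAbove_eq hk
    exact congrFun hw0 q

lemma adjugate_structure {N : ℕ} (A : Matrix (Fin (N + 1)) (Fin (N + 1)) ℂ)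
    (hA : A.IsSymm) (u : Fin (N + 1) → ℂ) (hu : u ≠ 0) (hAu : A.mulVec u = 0) :
    ∃ c : ℂ, ∀ i j, A.adjugate i j = c * u i * u j := by
  have hdet : A.det = 0 := by
    by_contra h
    exact hu (Matrix.eq_zero_of_mulVec_eq_zero h hAu)
  by_cases hadj : A.adjugate = 0
  · exact ⟨0, fun i j => by simp [hadj]⟩
  · have : ∃ a b, A.adjugate a b ≠ 0 := by
      by_contra h
      push_neg at h
      exact hadj (by ext i j; exact h i j)
    obtain ⟨a, b, hab⟩ := this
    have kp := ker_pivot A a b hab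
    have hua : u a ≠ 0 := by
      intro h0
      exact hu (kp u hAu h0)
    -- every kernel vector is a multiple of u
    have hker : ∀ w : Fin (N + 1) → ℂ, A.mulVec w = 0 → w = (w a / u a) • u := by
      intro w hw
      have h1 : A.mulVec (w - (w a / u a) • u) = 0 := by
        rw [Matrix.mulVec_sub, Matrix.mulVec_smul, hw, hAu, smul_zero, sub_zero]
      have h2 : (w - (w a / u a) • u) a = 0 := by
        simp only [Pi.sub_apply, Pi.smul_apply, smul_eq_mul]
        field_simp
        ring
      have := kp _ h1 h2
      have := sub_eq_zero.mp this
      exact this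
    -- columns of adjugate lie in the kernel
    have hcol : ∀ j, A.mulVec (fun i => A.adjugate i j) = 0 := by
      intro j
      funext i
      have : (A * A.adjugate) i j = 0 := by
        rw [Matrix.mul_adjugate, hdet, zero_smul]
        simp
      simpa [Matrix.mul_apply, Matrix.mulVec, dotProduct] using this
    have hstruct : ∀ i j, A.adjugate i j = (A.adjugate a j / u a) * u i := by
      intro i j
      have := congrFun (hker _ (hcol j)) i
      simpa using this
    have hsymAdj : ∀ i j, A.adjugate i j = A.adjugate j i := by
      intro i j
      have h1 : A.adjugateᵀ = A.adjugate := by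
        rw [Matrix.adjugate_transpose, hA]
      exact ((congrFun (congrFun h1 j) i).symm.trans (by rw [Matrix.transpose_apply])).symm
    refine ⟨A.adjugate a a / (u a * u a), fun i j => ?_⟩
    have h1 : A.adjugate i j = (A.adjugate a j / u a) * u i := hstruct i j
    have h2 : A.adjugate a j = (A.adjugate a a / u a) * u j := by
      rw [hsymAdj a j, hstruct j a, hsymAdj a a]
    rw [h1, h2]
    field_simp

theorem nonsingular_spectral_implies_regularCI (r N : ℕ)
    (Q : (Fin (r + 1) → ℂ) →ₗ[ℂ] Matrix (Fin (N + 1)) (Fin (N + 1)) ℂ)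
    (hsymm : ∀ x, (Q x).IsSymm)
    (hns : ∀ x : Fin (r + 1) → ℂ, x ≠ 0 → (Q x).det = 0 →
      fderiv ℂ (fun y => (Q y).det) x ≠ 0) :
    ∀ u : Fin (N + 1) → ℂ, u ≠ 0 →
      (∀ x : Fin (r + 1) → ℂ, u ⬝ᵥ (Q x).mulVec u = 0) →
      ∀ x : Fin (r + 1) → ℂ, (Q x).mulVec u = 0 → x = 0 := by
  intro u hu hquad x hxu
  by_contra hx
  set A := Q x with hA
  have hdet : A.det = 0 := by
    by_contra h
    exact hu (Matrix.eq_zero_of_mulVec_eq_zero h hxu)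
  -- adjugate structure
  obtain ⟨c, hc⟩ := adjugate_structure A (hsymm x) u hu hxu
  -- the rows map, as continuous linear maps
  let g : Fin (N + 1) → (Fin (r + 1) → ℂ) →L[ℂ] (Fin (N + 1) → ℂ) := fun i =>
    LinearMap.toContinuousLinearMap
      { toFun := fun y => Q y i
        map_add' := by intro y z; funext j; simp [map_add]
        map_smul' := by intro m y; funext j; simp [_root_.map_smul] }
  have hg : ∀ i (y : Fin (r + 1) → ℂ), g i y = Q y i := fun i y => rfl
  let D := detCM (N + 1)
  have hD : ∀ (m : Fin (N + 1) → Fin (N + 1) → ℂ), D m = (Matrix.of m).det := fun m => rfl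
  have hasF : HasFDerivAt (fun y => (Q y).det)
      (∑ i : Fin (N + 1), (D.toContinuousLinearMap (fun j => Q x j) i) ∘L g i) x := by
    have := HasFDerivAt.multilinear_comp (f := D) (g := fun i y => Q y i) (g' := g)
      (x := x) (fun i => (g i).hasFDerivAt)
    convert this using 1
    all_goals rfl
  have hfder := hasF.fderiv
  have hne := hns x hx hdet
  rw [hfder] at hne
  -- get a direction where the derivative is nonzero
  have : ∃ v, (∑ i : Fin (N + 1), (D.toContinuousLinearMap (fun j => Q x j) i) ∘L g i) v ≠ 0 := by
    by_contra h
    push_neg at h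
    exact hne (ContinuousLinearMap.ext h)
  obtain ⟨v, hv⟩ := this
  apply hv
  have happ : (∑ i : Fin (N + 1), (D.toContinuousLinearMap (fun j => Q x j) i) ∘L g i) v
      = ∑ i : Fin (N + 1), D (Function.update (fun j => Q x j) i (Q v i)) := by
    rw [ContinuousLinearMap.sum_apply]
    refine Finset.sum_congr rfl fun i _ => ?_
    rw [ContinuousLinearMap.comp_apply, hg]
    rfl
  rw [happ]
  -- each term is det of an update-row matrix; use cramer/adjugate
  have hterm : ∀ i : Fin (N + 1), D (Function.update (fun j => Q x j) i (Q v i))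
      = ∑ j, A.adjugate i j * (Q v) i j := by
    intro i
    have h1 : D (Function.update (fun j => Q x j) i (Q v i))
        = (A.updateRow i ((Q v) i)).det := rfl
    rw [h1, ← Matrix.cramer_transpose_apply, Matrix.cramer_eq_adjugate_mulVec,
      (hsymm x : Aᵀ = A)]
    simp [Matrix.mulVec, dotProduct]
    rfl
  rw [Finset.sum_congr rfl fun i _ => hterm i]
  have hBu := hquad v
  have : ∑ i, ∑ j, A.adjugate i j * (Q v) i j
      = c * (u ⬝ᵥ (Q v).mulVec u) := by
    simp only [dotProduct, Matrix.mulVec, Finset.mul_sum]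
    refine Finset.sum_congr rfl fun i _ => ?_
    refine Finset.sum_congr rfl fun j _ => ?_
    rw [hc i j]
    ring
  rw [this, hBu, mul_zero]
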